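/- For every δθ ∈ ℝ with δθ ≠ 0 and every δx, δp, x̂, p̂ ∈ ℝ² and θ̂ ∈ ℝ: exp_m(L(δθ, δx, δp)) · Ψ(θ̂, x̂, p̂) = Ψ(θ̂ + δθ, R(δθ) x̂ + B(δθ) δx, R(δθ) p̂ + B(δθ) δp), where exp_m is the matrix exponential and B(α) = [[sin α / α, −(1 − cos α)/α],[(1 − cos α)/α, sin α / α]]. (This identity shows the IEKF-SLAM update map φ(ξ, X̂) coincides with the Lie-group update exp(ξ) · χ̂ on SE₂(2).) -/

import Mathlib

open Matrix Real

/-- The 2×2 rotation matrix of angle `θ`. -/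
noncomputable def Rmat (θ : ℝ) : Matrix (Fin 2) (Fin 2) ℝ :=
  !![Real.cos θ, -Real.sin θ; Real.sin θ, Real.cos θ]

/-- The matrix `J = [[0,-1],[1,0]]`. -/
def Jmat : Matrix (Fin 2) (Fin 2) ℝ := !![0, -1; 1, 0]


/-- The element `Ψ(θ, x, p)` of the group `SE₂(2)` of multiple direct planar isometries,
as a 4×4 matrix: upper-left 2×2 block `R(θ)`, third and fourth columns with top blocks
`x` and `p`, bottom-right block `I₂`. -/
noncomputable def Psi (θ : ℝ) (x p : Fin 2 → ℝ) : Matrix (Fin 4) (Fin 4) ℝ :=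
  !![Real.cos θ, -Real.sin θ, x 0, p 0;
     Real.sin θ,  Real.cos θ, x 1, p 1;
     0, 0, 1, 0;
     0, 0, 0, 1]

/-- The element `L(α, u, q)` of the Lie algebra `se₂(2)`: upper-left 2×2 block `α J`, third and
fourth columns with top blocks `u` and `q`, last two rows zero. -/
def Lmat (α : ℝ) (u q : Fin 2 → ℝ) : Matrix (Fin 4) (Fin 4) ℝ :=
  !![0, -α, u 0, q 0;
     α,  0, u 1, q 1;
     0,  0, 0, 0;
     0,  0, 0, 0]

/-- The matrix `B(α)` appearing in the closed form of the `SE(2)` exponential. -/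
noncomputable def Bmat (α : ℝ) : Matrix (Fin 2) (Fin 2) ℝ :=
  !![Real.sin α / α, -((1 - Real.cos α) / α);
     (1 - Real.cos α) / α, Real.sin α / α]

set_option maxHeartbeats 1600000

lemma one4 : (1 : Matrix (Fin 4) (Fin 4) ℝ) = !![1,0,0,0;0,1,0,0;0,0,1,0;0,0,0,1] := by
  ext i j
  fin_cases i <;> fin_cases j <;> rfl

/-- Embedding of `ℂ × ℝ` into 4×4 real matrices. -/
def Ffun (zw : ℂ × ℝ) : Matrix (Fin 4) (Fin 4) ℝ :=
  !![zw.1.re, -zw.1.im, 0, 0;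
     zw.1.im,  zw.1.re, 0, 0;
     0, 0, zw.2, 0;
     0, 0, 0, zw.2]

lemma Ffun_one : Ffun 1 = 1 := by
  ext i j
  fin_cases i <;> fin_cases j <;>
    simp [Ffun, one4, Matrix.vecHead, Matrix.vecTail]

lemma Ffun_mul (a b : ℂ × ℝ) : Ffun (a * b) = Ffun a * Ffun b := by
  ext i j
  fin_cases i <;> fin_cases j <;>
    simp [Ffun, Matrix.mul_apply, Fin.sum_univ_four, Complex.mul_re, Complex.mul_im,
      Matrix.vecHead, Matrix.vecTail] <;> ring

lemma Ffun_zero : Ffun 0 = 0 := by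
  ext i j
  fin_cases i <;> fin_cases j <;> simp [Ffun, Matrix.vecHead, Matrix.vecTail]

lemma Ffun_add (a b : ℂ × ℝ) : Ffun (a + b) = Ffun a + Ffun b := by
  ext i j
  fin_cases i <;> fin_cases j <;> simp [Ffun, Matrix.vecHead, Matrix.vecTail] <;> ring

/-- `Ffun` as a ring hom. -/
def Fhom : ℂ × ℝ →+* Matrix (Fin 4) (Fin 4) ℝ where
  toFun := Ffun
  map_one' := Ffun_one
  map_mul' := Ffun_mul
  map_zero' := Ffun_zero
  map_add' := Ffun_add

lemma Fhom_continuous : Continuous Fhom := by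
  show Continuous Ffun
  apply continuous_matrix
  intro i j
  fin_cases i <;> fin_cases j <;>
    simp [Ffun, Matrix.vecHead, Matrix.vecTail] <;> fun_prop

/-- closed form of the exponential of `Lmat`. -/
lemma exp_Lmat (α : ℝ) (hα : α ≠ 0) (u q : Fin 2 → ℝ) :
    NormedSpace.exp (Lmat α u q) =
      Psi α ((Bmat α).mulVec u) ((Bmat α).mulVec q) := by
  set P : Matrix (Fin 4) (Fin 4) ℝ :=
    !![1,0,-(α⁻¹ * u 1),-(α⁻¹ * q 1); 0,1,α⁻¹ * u 0,α⁻¹ * q 0; 0,0,1,0; 0,0,0,1] with hP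
  set Q : Matrix (Fin 4) (Fin 4) ℝ :=
    !![1,0,α⁻¹ * u 1,α⁻¹ * q 1; 0,1,-(α⁻¹ * u 0),-(α⁻¹ * q 0); 0,0,1,0; 0,0,0,1] with hQ
  have h1 : P * Q = 1 := by
    rw [hP, hQ]
    ext i j
    fin_cases i <;> fin_cases j <;>
      simp [one4, Matrix.mul_apply, Fin.sum_univ_four, Matrix.vecHead, Matrix.vecTail]
  have h2 : Q * P = 1 := by
    rw [hP, hQ]
    ext i j
    fin_cases i <;> fin_cases j <;>
      simp [one4, Matrix.mul_apply, Fin.sum_univ_four, Matrix.vecHead, Matrix.vecTail]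
  have hFs : Fhom ((α : ℂ) * Complex.I, (0:ℝ)) =
      !![0,-α,0,0; α,0,0,0; 0,0,0,0; 0,0,0,0] := by
    show Ffun _ = _
    ext i j
    fin_cases i <;> fin_cases j <;>
      simp [Ffun, Matrix.vecHead, Matrix.vecTail]
  have hPD : P * !![0,-α,0,0; α,0,0,0; 0,0,0,0; 0,0,0,0] =
      !![0,-α,0,0; α,0,0,0; 0,0,0,0; 0,0,0,0] := by
    rw [hP]
    ext i j
    fin_cases i <;> fin_cases j <;>
      simp [Matrix.mul_apply, Fin.sum_univ_four, Matrix.vecHead, Matrix.vecTail]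
  have hDQ : (!![0,-α,0,0; α,0,0,0; 0,0,0,0; 0,0,0,0] : Matrix (Fin 4) (Fin 4) ℝ) * Q =
      Lmat α u q := by
    rw [hQ]
    ext i j
    fin_cases i <;> fin_cases j <;>
      simp [Lmat, Matrix.mul_apply, Fin.sum_univ_four, Matrix.vecHead, Matrix.vecTail] <;>
      (try field_simp) <;> (try ring)
  set U : (Matrix (Fin 4) (Fin 4) ℝ)ˣ := ⟨P, Q, h1, h2⟩ with hUdef
  have hL : Lmat α u q =
      (↑U : Matrix (Fin 4) (Fin 4) ℝ) * Fhom ((α : ℂ) * Complex.I, (0:ℝ)) *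
        (↑U⁻¹ : Matrix (Fin 4) (Fin 4) ℝ) := by
    show Lmat α u q = P * Fhom ((α : ℂ) * Complex.I, (0:ℝ)) * Q
    rw [hFs, hPD, hDQ]
  have hexp : NormedSpace.exp ((((α : ℂ) * Complex.I, (0:ℝ))) : ℂ × ℝ) =
      ((Complex.exp ((α : ℂ) * Complex.I), (1:ℝ)) : ℂ × ℝ) := by
    refine Prod.ext ?_ ?_
    · rw [Prod.fst_exp]
      rw [← Complex.exp_eq_exp_ℂ]
    · rw [Prod.snd_exp]
      simpa using NormedSpace.exp_zero (𝔸 := ℝ)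
  have hFexp : Fhom (NormedSpace.exp ((((α : ℂ) * Complex.I, (0:ℝ))) : ℂ × ℝ)) =
      Psi α 0 0 := by
    rw [hexp]
    show Ffun _ = _
    ext i j
    fin_cases i <;> fin_cases j <;>
      simp [Ffun, Psi, Complex.exp_ofReal_mul_I_re, Complex.exp_ofReal_mul_I_im,
        Matrix.vecHead, Matrix.vecTail]
  have hstep : P * Psi α 0 0 =
      !![Real.cos α, -Real.sin α, -(α⁻¹ * u 1), -(α⁻¹ * q 1);
         Real.sin α,  Real.cos α, α⁻¹ * u 0, α⁻¹ * q 0;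
         0,0,1,0; 0,0,0,1] := by
    rw [hP]
    ext i j
    fin_cases i <;> fin_cases j <;>
      simp [Psi, Matrix.mul_apply, Fin.sum_univ_four, Matrix.vecHead, Matrix.vecTail]
  letI : SeminormedRing (Matrix (Fin 4) (Fin 4) ℝ) := Matrix.linftyOpSemiNormedRing
  letI : NormedRing (Matrix (Fin 4) (Fin 4) ℝ) := Matrix.linftyOpNormedRing
  letI : NormedAlgebra ℝ (Matrix (Fin 4) (Fin 4) ℝ) := Matrix.linftyOpNormedAlgebra
  rw [hL, Matrix.exp_units_conj U (Fhom ((α : ℂ) * Complex.I, (0:ℝ))),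
    show NormedSpace.exp (Fhom ((α : ℂ) * Complex.I, (0:ℝ))) =
      Fhom (NormedSpace.exp ((((α : ℂ) * Complex.I, (0:ℝ))) : ℂ × ℝ)) from
      (NormedSpace.map_exp Fhom Fhom_continuous _).symm, hFexp]
  show P * Psi α 0 0 * Q = _
  rw [hstep, hQ]
  ext i j
  fin_cases i <;> fin_cases j <;>
    simp [Psi, Bmat, Matrix.mul_apply, Matrix.mulVec, dotProduct,
      Fin.sum_univ_four, Fin.sum_univ_two, Matrix.vecHead, Matrix.vecTail] <;>
    (try field_simp) <;> (try ring)

/-- The IEKF-SLAM update map coincides with the Lie-group update on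
`SE₂(2)`: for `δθ ≠ 0`,
`exp_m(L(δθ, δx, δp)) Ψ(θ̂, x̂, p̂) = Ψ(θ̂+δθ, R(δθ)x̂ + B(δθ)δx, R(δθ)p̂ + B(δθ)δp)`. -/
theorem statement18 (δθ : ℝ) (hδθ : δθ ≠ 0) (δx δp xh ph : Fin 2 → ℝ) (θh : ℝ) :
    NormedSpace.exp (Lmat δθ δx δp) * Psi θh xh ph =
      Psi (θh + δθ) ((Rmat δθ).mulVec xh + (Bmat δθ).mulVec δx)
        ((Rmat δθ).mulVec ph + (Bmat δθ).mulVec δp) := by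
  rw [exp_Lmat δθ hδθ δx δp]
  ext i j
  fin_cases i <;> fin_cases j <;>
    simp [Psi, Rmat, Bmat, Matrix.mul_apply, Matrix.mulVec, dotProduct,
      Fin.sum_univ_four, Fin.sum_univ_two, Real.cos_add, Real.sin_add,
      Matrix.vecHead, Matrix.vecTail] <;>
    (try field_simp) <;> (try ring)
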